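/- arXiv:2601.11922 — 3 statements merged into one kernel-verified Lean document; each statement's English description precedes it below -/
import Mathlib

section
/- Let u:[0,T]→ℝ be continuous, and suppose u is C² on [0,γ] and on [γ,T] for some γ∈(0,T), with one-sided derivatives ∂⁺u(γ) and ∂⁻u(γ) at γ. If τ < γ < τ+Δt with Δt>0, then u(τ+Δt) − u(τ) − Δt·u'(τ⁻ side derivative) = (1−κ)Δt(∂⁺u(γ) − ∂⁻u(γ)) + O(Δt²), where κ = (γ−τ)/Δt ∈ (0,1). In particular the error is of first order in Δt with coefficient proportional to the jump in the time derivative. -/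
open Set

lemma aux_deriv_facts (f : ℝ → ℝ) (hf : ContDiff ℝ 2 f) :
    Differentiable ℝ (deriv f) ∧ Continuous (deriv (deriv f)) := by
  have h2 : (2 : WithTop ℕ∞) = 1 + 1 := by norm_num
  rw [h2, contDiff_succ_iff_deriv] at hf
  exact contDiff_one_iff_deriv.mp hf.2.2

lemma aux_lip (f : ℝ → ℝ) (hf : ContDiff ℝ 2 f) {M x y : ℝ} (hxy : x ≤ y)
    (hM : ∀ t ∈ Set.Icc x y, |deriv (deriv f) t| ≤ M) :
    |deriv f y - deriv f x| ≤ M * (y - x) := by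
  have hd := (aux_deriv_facts f hf).1
  have := norm_image_sub_le_of_norm_deriv_le_segment'
    (f := deriv f) (f' := deriv (deriv f)) (a := x) (b := y)
    (fun t _ => ((hd t).hasDerivAt).hasDerivWithinAt)
    (fun t ht => hM t (Ico_subset_Icc_self ht)) y (right_mem_Icc.2 hxy)
  simpa [Real.norm_eq_abs] using this

lemma aux_tay (f : ℝ → ℝ) (hf : ContDiff ℝ 2 f) {M x y : ℝ} (hxy : x ≤ y) (hM0 : 0 ≤ M)
    (hM : ∀ t ∈ Set.Icc x y, |deriv (deriv f) t| ≤ M) :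
    |f y - f x - (y - x) * deriv f x| ≤ M * (y - x) ^ 2 := by
  have hdf : Differentiable ℝ f := hf.differentiable (by norm_num)
  have hg : ∀ t ∈ Icc x y,
      HasDerivWithinAt (fun t => f t - deriv f x * t) (deriv f t - deriv f x) (Icc x y) t := by
    intro t _
    exact (show HasDerivWithinAt (f - fun y => deriv f x * y) (deriv f t - deriv f x) (Icc x y) t by
      simpa only [mul_one] using ((hdf t).hasDerivAt.sub ((hasDerivAt_id' t).const_mul (deriv f x))).hasDerivWithinAt)
  have bound : ∀ t ∈ Ico x y, ‖deriv f t - deriv f x‖ ≤ M * (y - x) := by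
    intro t ht
    have h1 : |deriv f t - deriv f x| ≤ M * (t - x) :=
      aux_lip f hf ht.1 (fun s hs => hM s ⟨hs.1, hs.2.trans ht.2.le⟩)
    have : M * (t - x) ≤ M * (y - x) := by nlinarith [ht.2.le]
    simpa [Real.norm_eq_abs] using h1.trans this
  have := norm_image_sub_le_of_norm_deriv_le_segment' hg bound y (right_mem_Icc.2 hxy)
  rw [Real.norm_eq_abs] at this
  have e : (f y - deriv f x * y) - (f x - deriv f x * x) = f y - f x - (y - x) * deriv f x := by
    ring
  rw [e] at this
  nlinarith [this]

/-- one-step Euler truncation error across a phase boundary.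
`u` agrees with a `C²` function `u₁` on `[0,γ]` and with a `C²` function `u₂` on `[γ,T]`.
For a step `τ < γ < τ+Δt`, the forward-Euler residual (using the left-regime derivative)
equals `(1-κ)Δt (∂⁺u(γ) - ∂⁻u(γ))` up to an `O(Δt²)` error, `κ = (γ-τ)/Δt`. -/
theorem stmt0 (T γ : ℝ) (hγ0 : 0 < γ) (hγT : γ < T)
    (u u₁ u₂ : ℝ → ℝ)
    (hu₁ : ContDiff ℝ 2 u₁) (hu₂ : ContDiff ℝ 2 u₂)
    (h1 : ∀ t ∈ Set.Icc (0:ℝ) γ, u t = u₁ t)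
    (h2 : ∀ t ∈ Set.Icc γ T, u t = u₂ t) :
    ∃ C : ℝ, ∀ τ Δt : ℝ, 0 < Δt → 0 ≤ τ → τ < γ → γ < τ + Δt → τ + Δt ≤ T →
      |u (τ + Δt) - u τ - Δt * deriv u₁ τ -
        (1 - (γ - τ) / Δt) * Δt * (deriv u₂ γ - deriv u₁ γ)| ≤ C * Δt ^ 2 := by
  obtain ⟨M₁, hM₁⟩ := (isCompact_Icc (a := (0:ℝ)) (b := T)).exists_bound_of_continuousOn
    ((aux_deriv_facts u₁ hu₁).2.continuousOn)
  obtain ⟨M₂, hM₂⟩ := (isCompact_Icc (a := (0:ℝ)) (b := T)).exists_bound_of_continuousOn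
    ((aux_deriv_facts u₂ hu₂).2.continuousOn)
  set M : ℝ := max (max M₁ M₂) 0 with hMdef
  have hM0 : 0 ≤ M := le_max_right _ _
  have hb₁ : ∀ t ∈ Icc (0:ℝ) T, |deriv (deriv u₁) t| ≤ M := fun t ht =>
    (hM₁ t ht).trans ((le_max_left _ _).trans (le_max_left _ _))
  have hb₂ : ∀ t ∈ Icc (0:ℝ) T, |deriv (deriv u₂) t| ≤ M := fun t ht =>
    (hM₂ t ht).trans ((le_max_right _ _).trans (le_max_left _ _))
  refine ⟨3 * M, fun τ Δt hΔt hτ0 hτγ hγτ hT => ?_⟩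
  have hγle : γ ≤ T := hγT.le
  have hsub1 : Icc τ γ ⊆ Icc (0:ℝ) T := Icc_subset_Icc hτ0 hγle
  have hsub2 : Icc γ (τ + Δt) ⊆ Icc (0:ℝ) T := Icc_subset_Icc hγ0.le hT
  -- rewrite u at the two evaluation points
  have e1 : u τ = u₁ τ := h1 τ ⟨hτ0, hτγ.le⟩
  have e2 : u (τ + Δt) = u₂ (τ + Δt) := h2 _ ⟨hγτ.le, hT⟩
  have eγ : u₁ γ = u₂ γ := by
    rw [← h1 γ ⟨hγ0.le, le_rfl⟩, h2 γ ⟨le_rfl, hγle⟩]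
  have T1 : |u₂ (τ + Δt) - u₂ γ - (τ + Δt - γ) * deriv u₂ γ| ≤ M * (τ + Δt - γ) ^ 2 :=
    aux_tay u₂ hu₂ hγτ.le hM0 (fun t ht => hb₂ t (hsub2 ht))
  have T2 : |u₁ γ - u₁ τ - (γ - τ) * deriv u₁ τ| ≤ M * (γ - τ) ^ 2 :=
    aux_tay u₁ hu₁ hτγ.le hM0 (fun t ht => hb₁ t (hsub1 ht))
  have T3 : |deriv u₁ γ - deriv u₁ τ| ≤ M * (γ - τ) :=
    aux_lip u₁ hu₁ hτγ.le (fun t ht => hb₁ t (hsub1 ht))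
  have hΔne : Δt ≠ 0 := hΔt.ne'
  have key : (1 - (γ - τ) / Δt) * Δt = τ + Δt - γ := by field_simp; ring
  rw [e1, e2, key]
  have expand : u₂ (τ + Δt) - u₁ τ - Δt * deriv u₁ τ - (τ + Δt - γ) * (deriv u₂ γ - deriv u₁ γ)
      = (u₂ (τ + Δt) - u₂ γ - (τ + Δt - γ) * deriv u₂ γ)
        + (u₁ γ - u₁ τ - (γ - τ) * deriv u₁ τ)
        + (τ + Δt - γ) * (deriv u₁ γ - deriv u₁ τ) := by
    rw [← eγ]; ring
  rw [expand]
  have h1' : 0 < τ + Δt - γ := by linarith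
  have h2' : τ + Δt - γ ≤ Δt := by linarith
  have h3' : 0 < γ - τ := by linarith
  have h4' : γ - τ ≤ Δt := by linarith
  calc |_ + _ + (τ + Δt - γ) * (deriv u₁ γ - deriv u₁ τ)|
      ≤ |u₂ (τ + Δt) - u₂ γ - (τ + Δt - γ) * deriv u₂ γ|
        + |u₁ γ - u₁ τ - (γ - τ) * deriv u₁ τ|
        + |(τ + Δt - γ) * (deriv u₁ γ - deriv u₁ τ)| := by
        exact (abs_add_le _ _).trans (by gcongr; exact abs_add_le _ _)
    _ ≤ M * (τ + Δt - γ) ^ 2 + M * (γ - τ) ^ 2 + (τ + Δt - γ) * (M * (γ - τ)) := by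
        refine add_le_add (add_le_add T1 T2) ?_
        rw [abs_mul, abs_of_pos h1']
        exact mul_le_mul_of_nonneg_left T3 h1'.le
    _ ≤ 3 * M * Δt ^ 2 := by
        have a1 : M * (τ + Δt - γ) ^ 2 ≤ M * Δt ^ 2 := by
          apply mul_le_mul_of_nonneg_left _ hM0; nlinarith
        have a2 : M * (γ - τ) ^ 2 ≤ M * Δt ^ 2 := by
          apply mul_le_mul_of_nonneg_left _ hM0; nlinarith
        have a3 : (τ + Δt - γ) * (M * (γ - τ)) ≤ M * Δt ^ 2 := by nlinarith
        linarith
end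

section
/- With the setup of the previous piecewise-constant sequence (e_j = a for j < m*, e_j = b for j ≥ m*, a ≠ b): for m < m* one has A_m = a and B_m = ((m*−m)a + (M−m*+1)b)/(M−m+1), so that |A_m − B_m| = |a−b|·(M−m*+1)/(M−m+1), which is strictly increasing in m on {m₀,…,m*}. Symmetrically, for m > m*, |A_m − B_m| = |a−b|·m*/m, strictly decreasing in m. Consequently the weighted statistic C(m) = m(1−m/(M+1))(A_m−B_m)² attains its unique maximum over {m₀,…,M−m₀} at m = m*, provided m₀ ≤ m* ≤ M−m₀. -/
set_option maxHeartbeats 1600000 in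
/-- exact recovery of the change point of a noiseless step sequence by CUSUM.
Explicit formulas for the mean gap on each side of `m*`, its strict monotonicity towards
`m*`, and unique maximization of the weighted statistic `C` at `m*`. -/
theorem stmt5 (M m₀ mstar : ℕ) (a b : ℝ) (hab : a ≠ b)
    (h1 : 1 ≤ m₀) (h2 : m₀ ≤ mstar) (h3 : mstar ≤ M - m₀) (h4 : 2 * m₀ ≤ M)
    (e A B C : ℕ → ℝ)
    (he1 : ∀ j, j < mstar → e j = a) (he2 : ∀ j, mstar ≤ j → e j = b)
    (hA : ∀ m, A m = (1 / (m : ℝ)) * ∑ j ∈ Finset.range m, e j)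
    (hB : ∀ m, B m = (1 / ((M : ℝ) - m + 1)) * ∑ j ∈ Finset.Icc m M, e j)
    (hC : ∀ m, C m = (m : ℝ) * (1 - (m : ℝ) / ((M : ℝ) + 1)) * (A m - B m) ^ 2) :
    (∀ m, m₀ ≤ m → m < mstar →
      A m = a ∧
      B m = (((mstar : ℝ) - m) * a + ((M : ℝ) - mstar + 1) * b) / ((M : ℝ) - m + 1) ∧
      |A m - B m| = |a - b| * ((M : ℝ) - mstar + 1) / ((M : ℝ) - m + 1)) ∧
    (∀ m m', m₀ ≤ m → m < m' → m' ≤ mstar → |A m - B m| < |A m' - B m'|) ∧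
    (∀ m, mstar < m → m ≤ M - m₀ → |A m - B m| = |a - b| * (mstar : ℝ) / (m : ℝ)) ∧
    (∀ m m', mstar ≤ m → m < m' → m' ≤ M - m₀ → |A m' - B m'| < |A m - B m|) ∧
    (∀ m ∈ Finset.Icc m₀ (M - m₀), m ≠ mstar → C m < C mstar) := by
  have hsM : mstar + m₀ ≤ M := by omega
  have habs : (0:ℝ) < |a - b| := abs_pos.mpr (sub_ne_zero.mpr hab)
  -- sums
  have hsum_a : ∀ m, m ≤ mstar → ∑ j ∈ Finset.range m, e j = m * a := by
    intro m hm
    rw [Finset.sum_congr rfl fun j hj => he1 j (lt_of_lt_of_le (Finset.mem_range.mp hj) hm),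
      Finset.sum_const, Finset.card_range, nsmul_eq_mul]
  have hsum_b2 : ∀ m, mstar ≤ m → m ≤ M →
      ∑ j ∈ Finset.Icc m M, e j = ((M : ℝ) + 1 - m) * b := by
    intro m hm hm'
    rw [Finset.sum_congr rfl fun j hj => he2 j (le_trans hm (Finset.mem_Icc.mp hj).1),
      Finset.sum_const, Nat.card_Icc, nsmul_eq_mul, Nat.cast_sub (by omega)]
    push_cast; ring
  have hsum_mix : ∀ m, m ≤ mstar →
      ∑ j ∈ Finset.Icc m M, e j = ((mstar : ℝ) - m) * a + ((M : ℝ) + 1 - mstar) * b := by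
    intro m hm
    have h1' : ∑ j ∈ Finset.Ico m mstar, e j = ((mstar : ℝ) - m) * a := by
      rw [Finset.sum_congr rfl fun j hj => he1 j (Finset.mem_Ico.mp hj).2,
        Finset.sum_const, Nat.card_Ico, nsmul_eq_mul, Nat.cast_sub hm]
    have h2' : ∑ j ∈ Finset.Ico mstar (M + 1), e j = ((M : ℝ) + 1 - mstar) * b := by
      rw [Finset.sum_congr rfl fun j hj => he2 j (Finset.mem_Ico.mp hj).1,
        Finset.sum_const, Nat.card_Ico, nsmul_eq_mul, Nat.cast_sub (by omega)]
      push_cast; ring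
    rw [← Finset.Ico_add_one_right_eq_Icc, ← Finset.sum_Ico_consecutive _ hm (by omega : mstar ≤ M + 1),
      h1', h2']
  have hsum_right : ∀ m, mstar ≤ m →
      ∑ j ∈ Finset.range m, e j = (mstar : ℝ) * a + ((m : ℝ) - mstar) * b := by
    intro m hm
    have h1' : ∑ j ∈ Finset.Ico 0 mstar, e j = (mstar : ℝ) * a := by
      rw [Finset.sum_congr rfl fun j hj => he1 j (Finset.mem_Ico.mp hj).2,
        Finset.sum_const, Nat.card_Ico, Nat.sub_zero, nsmul_eq_mul]
    have h2' : ∑ j ∈ Finset.Ico mstar m, e j = ((m : ℝ) - mstar) * b := by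
      rw [Finset.sum_congr rfl fun j hj => he2 j (Finset.mem_Ico.mp hj).1,
        Finset.sum_const, Nat.card_Ico, nsmul_eq_mul, Nat.cast_sub hm]
    rw [Finset.range_eq_Ico, ← Finset.sum_Ico_consecutive _ (Nat.zero_le mstar) hm, h1', h2']
  -- formulas on the left, for 1 ≤ m ≤ mstar
  have hAleft : ∀ m, 1 ≤ m → m ≤ mstar → A m = a := by
    intro m h1m h2m
    have hm0 : (m : ℝ) ≠ 0 := by
      have : (0:ℝ) < m := by exact_mod_cast h1m
      linarith
    rw [hA, hsum_a m h2m]; field_simp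
  have hBleft : ∀ m, m ≤ mstar →
      B m = (((mstar : ℝ) - m) * a + ((M : ℝ) - mstar + 1) * b) / ((M : ℝ) - m + 1) := by
    intro m hm
    have hmM : (m : ℝ) ≤ M := by exact_mod_cast (by omega : m ≤ M)
    have hd : (M : ℝ) - m + 1 ≠ 0 := by linarith
    rw [hB, hsum_mix m hm, one_div, inv_mul_eq_div, div_eq_div_iff hd hd]
    ring
  have hGleft : ∀ m, 1 ≤ m → m ≤ mstar →
      A m - B m = (a - b) * ((M : ℝ) - mstar + 1) / ((M : ℝ) - m + 1) := by
    intro m h1m h2m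
    have hmM : (m : ℝ) ≤ M := by exact_mod_cast (by omega : m ≤ M)
    have hd : (M : ℝ) - m + 1 ≠ 0 := by linarith
    rw [hAleft m h1m h2m, hBleft m h2m]
    field_simp
    ring
  have hGabsleft : ∀ m, 1 ≤ m → m ≤ mstar →
      |A m - B m| = |a - b| * ((M : ℝ) - mstar + 1) / ((M : ℝ) - m + 1) := by
    intro m h1m h2m
    have hmM : (m : ℝ) ≤ M := by exact_mod_cast (by omega : m ≤ M)
    have hsMr : (mstar : ℝ) ≤ M := by exact_mod_cast (by omega : mstar ≤ M)
    rw [hGleft m h1m h2m, mul_div_assoc, abs_mul, mul_div_assoc,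
      abs_div, abs_of_pos (by linarith : (0:ℝ) < (M : ℝ) - mstar + 1),
      abs_of_pos (by linarith : (0:ℝ) < (M : ℝ) - m + 1)]
  -- formulas on the right, for mstar ≤ m ≤ M
  have hGright : ∀ m, mstar ≤ m → m ≤ M →
      A m - B m = (a - b) * (mstar : ℝ) / (m : ℝ) := by
    intro m h1m h2m
    have hm0 : (0:ℝ) < m := by exact_mod_cast (by omega : 0 < m)
    have hmM : (m : ℝ) ≤ M := by exact_mod_cast h2m
    have hd : (M : ℝ) - m + 1 ≠ 0 := by linarith
    have hm0' : (m : ℝ) ≠ 0 := ne_of_gt hm0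
    rw [hA, hB, hsum_right m h1m, hsum_b2 m h1m h2m]
    field_simp
    ring
  have hGabsright : ∀ m, mstar ≤ m → m ≤ M →
      |A m - B m| = |a - b| * (mstar : ℝ) / (m : ℝ) := by
    intro m h1m h2m
    have hm0 : (0:ℝ) < m := by exact_mod_cast (by omega : 0 < m)
    have hs0 : (0:ℝ) ≤ mstar := by positivity
    rw [hGright m h1m h2m, mul_div_assoc, abs_mul, mul_div_assoc, abs_div,
      abs_of_nonneg hs0, abs_of_pos hm0]
  -- value at mstar
  have hs1 : 1 ≤ mstar := le_trans h1 h2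
  have hGstar : A mstar - B mstar = a - b := by
    have := hGright mstar le_rfl (by omega)
    rw [this]
    have hs0 : (mstar : ℝ) ≠ 0 := by
      have : (0:ℝ) < mstar := by exact_mod_cast hs1
      linarith
    field_simp
  have hCstar : C mstar = (mstar : ℝ) * (1 - (mstar : ℝ) / ((M : ℝ) + 1)) * (a - b) ^ 2 := by
    rw [hC, hGstar]
  refine ⟨?_, ?_, ?_, ?_, ?_⟩
  · intro m hm1 hm2
    exact ⟨hAleft m (by omega) (by omega), hBleft m (by omega),
      hGabsleft m (by omega) (by omega)⟩
  · intro m m' hm1 hmm' hm'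
    rw [hGabsleft m (by omega) (by omega), hGabsleft m' (by omega) hm']
    have hsMr : (mstar : ℝ) ≤ M := by exact_mod_cast (by omega : mstar ≤ M)
    have hm'M : (m' : ℝ) ≤ mstar := by exact_mod_cast hm'
    have hmm'r : (m : ℝ) < m' := by exact_mod_cast hmm'
    exact div_lt_div_of_pos_left (mul_pos habs (by linarith)) (by linarith) (by linarith)
  · intro m hm1 hm2
    exact hGabsright m (by omega) (by omega)
  · intro m m' hm1 hmm' hm'
    rw [hGabsright m hm1 (by omega), hGabsright m' (by omega) (by omega)]
    have hm0 : (0:ℝ) < m := by exact_mod_cast (by omega : 0 < m)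
    have hmm'r : (m : ℝ) < m' := by exact_mod_cast hmm'
    have hs0 : (0:ℝ) < mstar := by exact_mod_cast hs1
    exact div_lt_div_of_pos_left (mul_pos habs hs0) hm0 hmm'r
  · intro m hm hne
    rw [Finset.mem_Icc] at hm
    have hmM : m ≤ M := by omega
    have hm1 : 1 ≤ m := by omega
    have hx0 : (0:ℝ) < m := by exact_mod_cast (by omega : 0 < m)
    have hxM : (m : ℝ) ≤ M := by exact_mod_cast hmM
    have hsMr : (mstar : ℝ) ≤ M := by exact_mod_cast (by omega : mstar ≤ M)
    have hs0 : (0:ℝ) < mstar := by exact_mod_cast hs1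
    have hK : (0:ℝ) < (a - b) ^ 2 := by rw [← sq_abs]; exact pow_pos habs 2
    have hN : (0:ℝ) < (M : ℝ) + 1 := by linarith
    rw [hCstar, hC]
    rcases lt_or_gt_of_ne hne with hlt | hgt
    · -- m < mstar
      have hxs : (m : ℝ) < mstar := by exact_mod_cast hlt
      rw [hGleft m hm1 (by omega)]
      have hdm : (0:ℝ) < (M : ℝ) - m + 1 := by linarith
      have hds : (0:ℝ) < (M : ℝ) - mstar + 1 := by linarith
      have e1 : (1 : ℝ) - (m : ℝ) / ((M : ℝ) + 1) = ((M : ℝ) + 1 - m) / ((M : ℝ) + 1) := by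
        field_simp
      have e2 : (1 : ℝ) - (mstar : ℝ) / ((M : ℝ) + 1) = ((M : ℝ) + 1 - mstar) / ((M : ℝ) + 1) := by
        field_simp
      have hne1 : ((M : ℝ) + 1) ≠ 0 := ne_of_gt hN
      have hne2 : ((M : ℝ) - m + 1) ≠ 0 := ne_of_gt hdm
      have L : (m : ℝ) * ((1:ℝ) - (m : ℝ) / ((M : ℝ) + 1)) *
          ((a - b) * ((M : ℝ) - mstar + 1) / ((M : ℝ) - m + 1)) ^ 2
          = ((m : ℝ) * ((M : ℝ) + 1 - m) * ((a - b) ^ 2 * ((M : ℝ) - mstar + 1) ^ 2)) /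
            (((M : ℝ) + 1) * (((M : ℝ) - m + 1) * ((M : ℝ) - m + 1))) := by
        field_simp
      have R : (mstar : ℝ) * ((1:ℝ) - (mstar : ℝ) / ((M : ℝ) + 1)) * (a - b) ^ 2
          = ((mstar : ℝ) * ((M : ℝ) + 1 - mstar) * (a - b) ^ 2) / ((M : ℝ) + 1) := by
        field_simp
      rw [L, R, div_lt_div_iff₀ (mul_pos hN (mul_pos hdm hdm)) hN]
      nlinarith [mul_pos (mul_pos (mul_pos (mul_pos hK hN) hdm) hds)
        (mul_pos (sub_pos.mpr hxs) hN)]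
    · -- mstar < m
      have hxs : (mstar : ℝ) < m := by exact_mod_cast hgt
      rw [hGright m (by omega) hmM]
      have e1 : (1 : ℝ) - (m : ℝ) / ((M : ℝ) + 1) = ((M : ℝ) + 1 - m) / ((M : ℝ) + 1) := by
        field_simp
      have e2 : (1 : ℝ) - (mstar : ℝ) / ((M : ℝ) + 1) = ((M : ℝ) + 1 - mstar) / ((M : ℝ) + 1) := by
        field_simp
      have hdm : (0:ℝ) < (M : ℝ) + 1 - m := by linarith
      have hne1 : ((M : ℝ) + 1) ≠ 0 := ne_of_gt hN
      have hne2 : (m : ℝ) ≠ 0 := ne_of_gt hx0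
      have L : (m : ℝ) * ((1:ℝ) - (m : ℝ) / ((M : ℝ) + 1)) *
          ((a - b) * (mstar : ℝ) / (m : ℝ)) ^ 2
          = (((M : ℝ) + 1 - m) * ((a - b) ^ 2 * (mstar : ℝ) ^ 2)) /
            (((M : ℝ) + 1) * (m : ℝ)) := by
        field_simp
      have R : (mstar : ℝ) * ((1:ℝ) - (mstar : ℝ) / ((M : ℝ) + 1)) * (a - b) ^ 2
          = ((mstar : ℝ) * ((M : ℝ) + 1 - mstar) * (a - b) ^ 2) / ((M : ℝ) + 1) := by
        field_simp
      rw [L, R, div_lt_div_iff₀ (mul_pos hN hx0) hN]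
      nlinarith [mul_pos (mul_pos (mul_pos (mul_pos hK hN) hx0) hs0)
        (mul_pos (sub_pos.mpr hxs) hN)]
end

section
/- Let e : {0,…,M} → ℝ be a sequence of the form e_j = a + η_j for j < m* and e_j = b + η_j for j ≥ m*, with a ≠ b and noise bounded by |η_j| ≤ ε for all j. Let m̂ maximize C(m) = m(1−m/(M+1))(A_m − B_m)² over m ∈ {m₀,…,M−m₀} where A_m, B_m are the pre/post means. If ε < |a−b|·c for a suitable explicit constant c depending on m₀, m*, and M (for instance ε < |a−b|/8 when m₀ ≤ m* ≤ M−m₀ and the weight ratios are controlled), then |A_m − B_m| at m = m* exceeds |A_m − B_m| at any m with |m − m*| large enough that the noiseless gap formula drops below |a−b| − 4ε; hence the estimator localizes the change point: the noiseless gap at m̂ satisfies |a−b|·min(m*/m̂, (M−m*+1)/(M−m̂+1)) ≥ |a−b| − 4ε (taking the appropriate side). -/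
lemma noise_sum {ε : ℝ} (η : ℕ → ℝ) (hη : ∀ j, |η j| ≤ ε) (s : Finset ℕ) :
    |∑ j ∈ s, η j| ≤ (s.card : ℝ) * ε := by
  calc |∑ j ∈ s, η j| ≤ ∑ j ∈ s, |η j| := Finset.abs_sum_le_sum_abs _ _
    _ ≤ ∑ _j ∈ s, ε := Finset.sum_le_sum fun j _ => hη j
    _ = (s.card : ℝ) * ε := by simp [mul_comm]

lemma avg_noise {ε : ℝ} (η : ℕ → ℝ) (hη : ∀ j, |η j| ≤ ε) (s : Finset ℕ)
    (c : ℝ) (hc : (s.card : ℝ) = c) (hcpos : 0 < c) :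
    |(1 / c) * ∑ j ∈ s, η j| ≤ ε := by
  rw [abs_mul, abs_of_pos (by positivity : (0:ℝ) < 1 / c)]
  calc (1 / c) * |∑ j ∈ s, η j| ≤ (1 / c) * (c * ε) := by
        apply mul_le_mul_of_nonneg_left _ (by positivity)
        rw [← hc]; exact noise_sum η hη s
    _ = ε := by field_simp

lemma gapL (M mstar m : ℕ) (a b ε : ℝ) (η e A B : ℕ → ℝ)
    (hη : ∀ j, |η j| ≤ ε)
    (he : ∀ j, e j = (if j < mstar then a else b) + η j)
    (hA : ∀ m, A m = (1 / (m : ℝ)) * ∑ j ∈ Finset.range m, e j)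
    (hB : ∀ m, B m = (1 / ((M : ℝ) - m + 1)) * ∑ j ∈ Finset.Icc m M, e j)
    (hm1 : 1 ≤ m) (hle : m ≤ mstar) (hsM : mstar ≤ M) :
    |A m - B m - (a - b) * (((M:ℝ) - mstar + 1) / ((M:ℝ) - m + 1))| ≤ 2 * ε := by
  have hmM : m ≤ M := hle.trans hsM
  have hm0 : (0:ℝ) < m := by exact_mod_cast hm1
  have hmr : (m:ℝ) ≤ M := by exact_mod_cast hmM
  have hD : (0:ℝ) < (M:ℝ) - m + 1 := by linarith
  have hSA : ∑ j ∈ Finset.range m, e j = (m:ℝ) * a + ∑ j ∈ Finset.range m, η j := by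
    simp only [he]
    rw [Finset.sum_add_distrib]
    congr 1
    rw [Finset.sum_congr rfl (fun j hj => if_pos (lt_of_lt_of_le (Finset.mem_range.mp hj) hle))]
    simp [mul_comm]
  have hSB : ∑ j ∈ Finset.Icc m M, e j
      = (((mstar:ℝ) - m) * a + ((M:ℝ) - mstar + 1) * b) + ∑ j ∈ Finset.Icc m M, η j := by
    simp only [he]
    rw [Finset.sum_add_distrib]
    congr 1
    have hIcc : Finset.Icc m M = Finset.Ico m (M+1) := by rw [Finset.Ico_add_one_right_eq_Icc]
    rw [hIcc, ← Finset.sum_Ico_consecutive _ hle (by omega : mstar ≤ M + 1)]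
    rw [Finset.sum_congr rfl (fun j hj => if_pos (Finset.mem_Ico.mp hj).2),
        Finset.sum_congr rfl (fun j hj => if_neg (by
          have := (Finset.mem_Ico.mp hj).1; omega))]
    rw [Finset.sum_const, Finset.sum_const, Nat.card_Ico, Nat.card_Ico,
        nsmul_eq_mul, nsmul_eq_mul,
        Nat.cast_sub hle, Nat.cast_sub (by omega : mstar ≤ M + 1)]
    push_cast
    ring
  have hNA : |(1 / (m:ℝ)) * ∑ j ∈ Finset.range m, η j| ≤ ε :=
    avg_noise η hη _ (m:ℝ) (by simp) hm0
  have hNB : |(1 / ((M:ℝ) - m + 1)) * ∑ j ∈ Finset.Icc m M, η j| ≤ ε :=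
    avg_noise η hη _ _ (by rw [Nat.card_Icc, Nat.cast_sub (by omega : m ≤ M + 1)]; push_cast; ring) hD
  have heq : A m - B m - (a - b) * (((M:ℝ) - mstar + 1) / ((M:ℝ) - m + 1))
      = (1 / (m:ℝ)) * ∑ j ∈ Finset.range m, η j
        - (1 / ((M:ℝ) - m + 1)) * ∑ j ∈ Finset.Icc m M, η j := by
    rw [hA, hB, hSA, hSB]
    field_simp
    ring
  rw [heq, sub_eq_add_neg]
  calc |_ + _| ≤ _ + _ := abs_add_le _ _
    _ ≤ ε + ε := by rw [abs_neg]; exact add_le_add hNA hNB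
    _ = 2 * ε := by ring

lemma gapR (M mstar m : ℕ) (a b ε : ℝ) (η e A B : ℕ → ℝ)
    (hη : ∀ j, |η j| ≤ ε)
    (he : ∀ j, e j = (if j < mstar then a else b) + η j)
    (hA : ∀ m, A m = (1 / (m : ℝ)) * ∑ j ∈ Finset.range m, e j)
    (hB : ∀ m, B m = (1 / ((M : ℝ) - m + 1)) * ∑ j ∈ Finset.Icc m M, e j)
    (hm1 : 1 ≤ mstar) (hle : mstar ≤ m) (hmM : m ≤ M) :
    |A m - B m - (a - b) * ((mstar:ℝ) / (m:ℝ))| ≤ 2 * ε := by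
  have hm0 : (0:ℝ) < m := by exact_mod_cast hm1.trans hle
  have hmr : (m:ℝ) ≤ M := by exact_mod_cast hmM
  have hD : (0:ℝ) < (M:ℝ) - m + 1 := by linarith
  have hSA : ∑ j ∈ Finset.range m, e j
      = ((mstar:ℝ) * a + ((m:ℝ) - mstar) * b) + ∑ j ∈ Finset.range m, η j := by
    simp only [he]
    rw [Finset.sum_add_distrib]
    congr 1
    rw [Finset.range_eq_Ico, ← Finset.sum_Ico_consecutive _ (Nat.zero_le mstar) hle]
    rw [Finset.sum_congr rfl (fun j hj => if_pos (Finset.mem_Ico.mp hj).2),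
        Finset.sum_congr rfl (fun j hj => if_neg (by
          have := (Finset.mem_Ico.mp hj).1; omega))]
    rw [Finset.sum_const, Finset.sum_const, Nat.card_Ico, Nat.card_Ico,
        nsmul_eq_mul, nsmul_eq_mul, Nat.cast_sub hle, Nat.sub_zero]
  have hSB : ∑ j ∈ Finset.Icc m M, e j
      = ((M:ℝ) - m + 1) * b + ∑ j ∈ Finset.Icc m M, η j := by
    simp only [he]
    rw [Finset.sum_add_distrib]
    congr 1
    rw [Finset.sum_congr rfl (fun j hj => if_neg (by
      have := (Finset.mem_Icc.mp hj).1; omega))]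
    rw [Finset.sum_const, Nat.card_Icc, nsmul_eq_mul,
        Nat.cast_sub (by omega : m ≤ M + 1)]
    push_cast
    ring
  have hNA : |(1 / (m:ℝ)) * ∑ j ∈ Finset.range m, η j| ≤ ε :=
    avg_noise η hη _ (m:ℝ) (by simp) hm0
  have hNB : |(1 / ((M:ℝ) - m + 1)) * ∑ j ∈ Finset.Icc m M, η j| ≤ ε :=
    avg_noise η hη _ _ (by rw [Nat.card_Icc, Nat.cast_sub (by omega : m ≤ M + 1)]; push_cast; ring) hD
  have heq : A m - B m - (a - b) * ((mstar:ℝ) / (m:ℝ))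
      = (1 / (m:ℝ)) * ∑ j ∈ Finset.range m, η j
        - (1 / ((M:ℝ) - m + 1)) * ∑ j ∈ Finset.Icc m M, η j := by
    rw [hA, hB, hSA, hSB]
    field_simp
    ring
  rw [heq, sub_eq_add_neg]
  calc |_ + _| ≤ _ + _ := abs_add_le _ _
    _ ≤ ε + ε := by rw [abs_neg]; exact add_le_add hNA hNB
    _ = 2 * ε := by ring

/-- robustness of CUSUM change-point localization under bounded noise.
For a step sequence `a`/`b` with jump at `m*` contaminated by noise bounded by `ε`
(`ε < |a−b|/8`), any maximizer `m̂` of the mean gap `|A_m − B_m|` over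
`{m₀,…,M−m₀}` satisfies the localization inequality
`|a−b|·min(m*/m̂, (M−m*+1)/(M−m̂+1)) ≥ |a−b| − 4ε`. -/
theorem stmt17 (M m₀ mstar mhat : ℕ) (a b ε : ℝ) (hab : a ≠ b)
    (hε0 : 0 ≤ ε) (hε8 : ε < |a - b| / 8)
    (h1 : 1 ≤ m₀) (h2 : m₀ ≤ mstar) (h3 : mstar ≤ M - m₀) (h4 : 2 * m₀ ≤ M)
    (η e A B : ℕ → ℝ)
    (hη : ∀ j, |η j| ≤ ε)
    (he : ∀ j, e j = (if j < mstar then a else b) + η j)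
    (hA : ∀ m, A m = (1 / (m : ℝ)) * ∑ j ∈ Finset.range m, e j)
    (hB : ∀ m, B m = (1 / ((M : ℝ) - m + 1)) * ∑ j ∈ Finset.Icc m M, e j)
    (hmem : mhat ∈ Finset.Icc m₀ (M - m₀))
    (hmax : ∀ m ∈ Finset.Icc m₀ (M - m₀), |A m - B m| ≤ |A mhat - B mhat|) :
    |a - b| - 4 * ε ≤
      |a - b| * min ((mstar : ℝ) / (mhat : ℝ))
        (((M : ℝ) - mstar + 1) / ((M : ℝ) - mhat + 1)) := by
  obtain ⟨hh1, hh2⟩ := Finset.mem_Icc.mp hmem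
  have hm₀M : m₀ ≤ M := by omega
  have hsM : mstar ≤ M := by omega
  have hhM : mhat ≤ M := by omega
  have hs1 : 1 ≤ mstar := h1.trans h2
  have hh1' : 1 ≤ mhat := h1.trans hh1
  have hs0 : (0:ℝ) < mstar := by exact_mod_cast hs1
  have hh0 : (0:ℝ) < mhat := by exact_mod_cast hh1'
  have hsr : (mstar:ℝ) ≤ M := by exact_mod_cast hsM
  have hhr : (mhat:ℝ) ≤ M := by exact_mod_cast hhM
  have hDs : (0:ℝ) < (M:ℝ) - mstar + 1 := by linarith
  have hDh : (0:ℝ) < (M:ℝ) - mhat + 1 := by linarith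
  -- lower bound at mstar
  have hstar : |A mstar - B mstar - (a - b)| ≤ 2 * ε := by
    have := gapR M mstar mstar a b ε η e A B hη he hA hB hs1 le_rfl hsM
    rwa [div_self (ne_of_gt hs0), mul_one] at this
  have hlow : |a - b| - 2 * ε ≤ |A mstar - B mstar| := by
    have h' : |a - b| - |A mstar - B mstar| ≤ |A mstar - B mstar - (a - b)| := by
      rw [abs_sub_comm (A mstar - B mstar) (a - b)]
      exact abs_sub_abs_le_abs_sub _ _
    linarith
  have hmaxs : |A mstar - B mstar| ≤ |A mhat - B mhat| :=
    hmax mstar (Finset.mem_Icc.mpr ⟨h2, h3⟩)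
  rcases le_total mhat mstar with hcase | hcase
  · -- mhat ≤ mstar : min is the right component
    set R : ℝ := ((M:ℝ) - mstar + 1) / ((M:ℝ) - mhat + 1) with hR
    have hR0 : 0 ≤ R := by positivity
    have hgap := gapL M mstar mhat a b ε η e A B hη he hA hB hh1' hcase hsM
    have hup : |A mhat - B mhat| ≤ |a - b| * R + 2 * ε := by
      have h' := abs_sub_abs_le_abs_sub (A mhat - B mhat) ((a - b) * R)
      have habs : |(a - b) * R| = |a - b| * R := by
        rw [abs_mul, abs_of_nonneg hR0]
      linarith [habs ▸ h']
    have hmin : min ((mstar : ℝ) / (mhat : ℝ)) R = R := by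
      apply min_eq_right
      rw [div_le_div_iff₀ hDh hh0]
      have hcr : (mhat:ℝ) ≤ mstar := by exact_mod_cast hcase
      nlinarith
    rw [hmin]
    nlinarith [abs_nonneg (a - b)]
  · -- mstar ≤ mhat : min is the left component
    set R : ℝ := (mstar : ℝ) / (mhat : ℝ) with hR
    have hR0 : 0 ≤ R := by positivity
    have hgap := gapR M mstar mhat a b ε η e A B hη he hA hB hs1 hcase hhM
    have hup : |A mhat - B mhat| ≤ |a - b| * R + 2 * ε := by
      have h' := abs_sub_abs_le_abs_sub (A mhat - B mhat) ((a - b) * R)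
      have habs : |(a - b) * R| = |a - b| * R := by
        rw [abs_mul, abs_of_nonneg hR0]
      linarith [habs ▸ h']
    have hmin : min R (((M:ℝ) - mstar + 1) / ((M:ℝ) - mhat + 1)) = R := by
      apply min_eq_left
      rw [div_le_div_iff₀ hh0 hDh]
      have hcr : (mstar:ℝ) ≤ mhat := by exact_mod_cast hcase
      nlinarith
    rw [hmin]
    nlinarith [abs_nonneg (a - b)]
end
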